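/- Let H be a k-uniform hypergraph (k even) and ℓ ≥ k/2. In the level-ℓ Kikuchi graph (vertices are size-ℓ subsets of V, with w₁ ~ w₂ iff w₁ △ w₂ ∈ H, and edge {w₁,w₂} colored by the hyperedge w₁ △ w₂), for any closed walk W = (w₀, w₁, …, w_T = w₀), the set of colors appearing an odd number of times along W forms an even cover of H: the symmetric difference of those hyperedges is empty. -/

import Mathlib

open Finset

instance symmDiffCommFinset {α : Type*} [DecidableEq α] :
    Std.Commutative (α := Finset α) symmDiff := ⟨fun a b => symmDiff_comm a b⟩

instance symmDiffAssocFinset {α : Type*} [DecidableEq α] :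
    Std.Associative (α := Finset α) symmDiff := ⟨fun a b c => symmDiff_assoc a b c⟩

/-- Indicator map into functions to `ZMod 2`. -/
def phiZ {V : Type*} [DecidableEq V] (s : Finset V) : V → ZMod 2 :=
  fun v => if v ∈ s then 1 else 0

lemma phiZ_symmDiff {V : Type*} [DecidableEq V] (a b : Finset V) :
    phiZ (symmDiff a b) = phiZ a + phiZ b := by
  funext v
  simp only [phiZ, Pi.add_apply, Finset.mem_symmDiff]
  by_cases ha : v ∈ a <;> by_cases hb : v ∈ b <;> simp [ha, hb] <;> decide

lemma phiZ_eq_zero_iff {V : Type*} [DecidableEq V] (s : Finset V) :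
    phiZ s = 0 ↔ s = ∅ := by
  constructor
  · intro h
    ext v
    simp only [Finset.notMem_empty, iff_false]
    intro hv
    have := congrFun h v
    simp [phiZ, hv] at this
  · rintro rfl; funext v; simp [phiZ]

lemma phiZ_fold {V : Type*} [DecidableEq V] (s : Finset (Finset V)) :
    phiZ (s.fold symmDiff (∅ : Finset V) id) = ∑ C ∈ s, phiZ C := by
  classical
  induction s using Finset.induction_on with
  | empty => funext v; simp [phiZ]
  | insert C s hC ih =>
    rw [Finset.fold_insert hC, Finset.sum_insert hC, id_eq, phiZ_symmDiff, ih]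

theorem stmt_5 {V : Type*} [DecidableEq V] (k ℓ T : ℕ) (hk : Even k) (hkl : k / 2 ≤ ℓ)
    (H : Finset (Finset V)) (hH : ∀ e ∈ H, e.card = k)
    (w : Fin (T + 1) → Finset V) (hw : ∀ t, (w t).card = ℓ)
    (hstep : ∀ t : Fin T, symmDiff (w t.castSucc) (w t.succ) ∈ H)
    (hclosed : w (Fin.last T) = w 0) :
    Finset.fold symmDiff (∅ : Finset V) id
      (H.filter (fun C => Odd ((Finset.univ.filter
        (fun t : Fin T => symmDiff (w t.castSucc) (w t.succ) = C)).card))) = ∅ := by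
  classical
  set c : Fin T → Finset V := fun t => symmDiff (w t.castSucc) (w t.succ) with hc
  rw [← phiZ_eq_zero_iff, phiZ_fold]
  -- total sum over all steps telescopes to zero
  have htel : ∑ t : Fin T, phiZ (c t) = 0 := by
    have hsplit : ∀ t : Fin T, phiZ (c t) = phiZ (w t.castSucc) + phiZ (w t.succ) := fun t =>
      phiZ_symmDiff _ _
    rw [Finset.sum_congr rfl (fun t _ => hsplit t), Finset.sum_add_distrib]
    have h1 : ∑ t : Fin T, phiZ (w t.castSucc) =
        (∑ t : Fin (T + 1), phiZ (w t)) - phiZ (w (Fin.last T)) :=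
      eq_sub_of_add_eq (Fin.sum_univ_castSucc (f := fun t => phiZ (w t))).symm
    have h2 : ∑ t : Fin T, phiZ (w t.succ) =
        (∑ t : Fin (T + 1), phiZ (w t)) - phiZ (w 0) := by
      refine eq_sub_of_add_eq ?_
      rw [add_comm]
      exact (Fin.sum_univ_succ (f := fun t => phiZ (w t))).symm
    rw [h1, h2, hclosed]
    have hx : ∀ x : V → ZMod 2, x + x = 0 := by
      intro x; funext v
      exact CharTwo.add_self_eq_zero (x v)
    exact hx _
  -- group by color
  have hgroup : ∑ C ∈ H, ∑ t ∈ Finset.univ.filter (fun t : Fin T => c t = C), phiZ (c t)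
      = ∑ t : Fin T, phiZ (c t) :=
    Finset.sum_fiberwise_of_maps_to (fun t _ => hstep t) _
  have hfiber : ∀ C ∈ H,
      (∑ t ∈ Finset.univ.filter (fun t : Fin T => c t = C), phiZ (c t)) =
      if Odd ((Finset.univ.filter (fun t : Fin T => c t = C)).card) then phiZ C else 0 := by
    intro C _
    rw [Finset.sum_congr rfl (fun t ht => by
      rw [(Finset.mem_filter.mp ht).2]), Finset.sum_const]
    set n := (Finset.univ.filter (fun t : Fin T => c t = C)).card with hn
    rw [← Nat.cast_smul_eq_nsmul (ZMod 2)]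
    rcases Nat.even_or_odd n with he | ho
    · have h0 : (n : ZMod 2) = 0 := (ZMod.natCast_eq_zero_iff n 2).mpr he.two_dvd
      rw [h0, zero_smul, if_neg (Nat.not_odd_iff_even.mpr he)]
    · have h1 : (n : ZMod 2) = 1 := by
        rw [← ZMod.natCast_mod n 2, Nat.odd_iff.mp ho, Nat.cast_one]
      rw [h1, one_smul, if_pos ho]
  rw [Finset.sum_congr rfl hfiber] at hgroup
  rw [Finset.sum_filter]
  exact hgroup.trans htel
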